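/- Let θ¹, θ², θ³ ∈ (0,π) with θ¹ + θ² + θ³ = 2π and at least one θⁱ ≠ π/2, let α̃¹, α̃², α̃³ > 0 be such that sin θ¹/α̃¹ = sin θ²/α̃² = sin θ³/α̃³, and let 𝓘 be the matrix with rows (0, c²/s¹, −c³/s¹), (−c¹/s², 0, c³/s²), (c¹/s³, −c²/s³, 0) where sⁱ = sin θⁱ, cⁱ = cos θⁱ. Then for every nonzero vector N = (N¹,N²,N³) ∈ ℝ³ with α̃¹N¹ + α̃²N² + α̃³N³ = 0, one has 𝓘N ≠ 0. -/
import Mathlib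

noncomputable section

lemma cos_zero_eq_pi_div_two {θ : ℝ} (h : θ ∈ Set.Ioo 0 Real.pi)
    (hc : Real.cos θ = 0) : θ = Real.pi / 2 := by
  have hπ := Real.pi_pos
  apply Real.injOn_cos ⟨le_of_lt h.1, le_of_lt h.2⟩ ⟨by positivity, by linarith⟩
  rw [hc, Real.cos_pi_div_two]

theorem stmt6 (θ1 θ2 θ3 : ℝ)
    (hθ1 : θ1 ∈ Set.Ioo 0 Real.pi) (hθ2 : θ2 ∈ Set.Ioo 0 Real.pi)
    (hθ3 : θ3 ∈ Set.Ioo 0 Real.pi) (hsum : θ1 + θ2 + θ3 = 2 * Real.pi)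
    (hnotall : θ1 ≠ Real.pi / 2 ∨ θ2 ≠ Real.pi / 2 ∨ θ3 ≠ Real.pi / 2)
    (α1 α2 α3 : ℝ) (hα1 : 0 < α1) (hα2 : 0 < α2) (hα3 : 0 < α3)
    (hyoung : Real.sin θ1 / α1 = Real.sin θ2 / α2 ∧
      Real.sin θ2 / α2 = Real.sin θ3 / α3)
    (N : Fin 3 → ℝ) (hN : N ≠ 0)
    (hsumN : α1 * N 0 + α2 * N 1 + α3 * N 2 = 0) :
    (!![0, Real.cos θ2 / Real.sin θ1, -(Real.cos θ3 / Real.sin θ1);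
        -(Real.cos θ1 / Real.sin θ2), 0, Real.cos θ3 / Real.sin θ2;
        Real.cos θ1 / Real.sin θ3, -(Real.cos θ2 / Real.sin θ3), 0] :
      Matrix (Fin 3) (Fin 3) ℝ).mulVec N ≠ 0 := by
  intro h
  have hs1 : 0 < Real.sin θ1 := Real.sin_pos_of_pos_of_lt_pi hθ1.1 hθ1.2
  have hs2 : 0 < Real.sin θ2 := Real.sin_pos_of_pos_of_lt_pi hθ2.1 hθ2.2
  have hs3 : 0 < Real.sin θ3 := Real.sin_pos_of_pos_of_lt_pi hθ3.1 hθ3.2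
  set s1 := Real.sin θ1 with hs1def
  set s2 := Real.sin θ2 with hs2def
  set s3 := Real.sin θ3 with hs3def
  set c1 := Real.cos θ1 with hc1def
  set c2 := Real.cos θ2 with hc2def
  set c3 := Real.cos θ3 with hc3def
  have hs1' : s1 ≠ 0 := ne_of_gt hs1
  have hs2' : s2 ≠ 0 := ne_of_gt hs2
  have hs3' : s3 ≠ 0 := ne_of_gt hs3
  have h0 := congrFun h 0
  have h1 := congrFun h 1
  have h2 := congrFun h 2
  simp [Matrix.mulVec, dotProduct, Fin.sum_univ_three] at h0 h1 h2
  field_simp at h0 h1 h2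
  have e1 : c2 * N 1 = c3 * N 2 := by linarith
  have e2 : c1 * N 0 = c3 * N 2 := by linarith
  have e3 : c1 * N 0 = c2 * N 1 := by linarith
  have ha2 : α2 * s1 = α1 * s2 := by
    have h' := hyoung.1
    field_simp at h'
    linarith
  have ha3'' : α3 * s2 = α2 * s3 := by
    have h' := hyoung.2
    field_simp at h'
    linarith
  have ha3 : α3 * s1 = α1 * s3 := by
    have : s2 * (α3 * s1 - α1 * s3) = 0 := by linear_combination s1 * ha3'' + s3 * ha2
    rcases mul_eq_zero.mp this with h' | h'
    · exact absurd h' hs2'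
    · linarith
  have key : s1 * c2 * c3 + c1 * s2 * c3 + c1 * c2 * s3 = s1 * s2 * s3 := by
    have h0' : Real.sin (θ1 + θ2 + θ3) = 0 := by rw [hsum]; simp [Real.sin_two_pi]
    rw [Real.sin_add, Real.sin_add, Real.cos_add] at h0'
    linear_combination h0'
  have two_zero : ∀ a b : ℝ, a ∈ Set.Ioo 0 Real.pi → b ∈ Set.Ioo 0 Real.pi →
      Real.cos a = 0 → Real.cos b = 0 → a = Real.pi / 2 ∧ b = Real.pi / 2 :=
    fun a b ha hb hca hcb => ⟨cos_zero_eq_pi_div_two ha hca, cos_zero_eq_pi_div_two hb hcb⟩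
  have hNzero : N 0 = 0 ∧ N 1 = 0 ∧ N 2 = 0 := by
    by_cases hc1 : c1 = 0
    · have hc2 : c2 ≠ 0 := by
        intro hc2
        obtain ⟨ha, hb⟩ := two_zero θ1 θ2 hθ1 hθ2 hc1 hc2
        have : θ3 = Real.pi := by rw [ha, hb] at hsum; linarith
        exact absurd this (ne_of_lt hθ3.2)
      have hc3 : c3 ≠ 0 := by
        intro hc3
        obtain ⟨ha, hb⟩ := two_zero θ1 θ3 hθ1 hθ3 hc1 hc3
        have : θ2 = Real.pi := by rw [ha, hb] at hsum; linarith
        exact absurd this (ne_of_lt hθ2.2)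
      have hN2 : N 2 = 0 := by
        have : c3 * N 2 = 0 := by rw [← e2, hc1]; ring
        exact (mul_eq_zero.mp this).resolve_left hc3
      have hN1 : N 1 = 0 := by
        have : c2 * N 1 = 0 := by rw [e1, hN2]; ring
        exact (mul_eq_zero.mp this).resolve_left hc2
      have hN0 : N 0 = 0 := by
        have : α1 * N 0 = 0 := by rw [hN1, hN2] at hsumN; linarith
        exact (mul_eq_zero.mp this).resolve_left (ne_of_gt hα1)
      exact ⟨hN0, hN1, hN2⟩
    · by_cases hc2 : c2 = 0
      · have hc3 : c3 ≠ 0 := by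
          intro hc3
          obtain ⟨ha, hb⟩ := two_zero θ2 θ3 hθ2 hθ3 hc2 hc3
          have : θ1 = Real.pi := by rw [ha, hb] at hsum; linarith
          exact absurd this (ne_of_lt hθ1.2)
        have hN2 : N 2 = 0 := by
          have : c3 * N 2 = 0 := by rw [← e1, hc2]; ring
          exact (mul_eq_zero.mp this).resolve_left hc3
        have hN0 : N 0 = 0 := by
          have : c1 * N 0 = 0 := by rw [e3, hc2]; ring
          exact (mul_eq_zero.mp this).resolve_left hc1
        have hN1 : N 1 = 0 := by
          have : α2 * N 1 = 0 := by rw [hN0, hN2] at hsumN; linarith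
          exact (mul_eq_zero.mp this).resolve_left (ne_of_gt hα2)
        exact ⟨hN0, hN1, hN2⟩
      · by_cases hc3 : c3 = 0
        · have hN0 : N 0 = 0 := by
            have : c1 * N 0 = 0 := by rw [e2, hc3]; ring
            exact (mul_eq_zero.mp this).resolve_left hc1
          have hN1 : N 1 = 0 := by
            have : c2 * N 1 = 0 := by rw [e1, hc3]; ring
            exact (mul_eq_zero.mp this).resolve_left hc2
          have hN2 : N 2 = 0 := by
            have : α3 * N 2 = 0 := by rw [hN0, hN1] at hsumN; linarith
            exact (mul_eq_zero.mp this).resolve_left (ne_of_gt hα3)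
          exact ⟨hN0, hN1, hN2⟩
        · -- all cosines nonzero
          have hsines : s1 * N 0 + s2 * N 1 + s3 * N 2 = 0 := by
            have h' : α1 * (s1 * N 0 + s2 * N 1 + s3 * N 2) = 0 := by
              linear_combination s1 * hsumN - N 1 * ha2 - N 2 * ha3
            exact (mul_eq_zero.mp h').resolve_left (ne_of_gt hα1)
          have hmain : s1 * s2 * s3 * (c1 * N 0) = 0 := by
            linear_combination c1 * c2 * c3 * hsines + c1 * c3 * s2 * e3 +
              c1 * c2 * s3 * e2 - (c1 * N 0) * key
          have hN0 : N 0 = 0 := by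
            rcases mul_eq_zero.mp hmain with h' | h'
            · exact absurd h' (by exact mul_ne_zero (mul_ne_zero hs1' hs2') hs3')
            · exact (mul_eq_zero.mp h').resolve_left hc1
          have hN1 : N 1 = 0 := by
            have : c2 * N 1 = 0 := by rw [← e3, hN0]; ring
            exact (mul_eq_zero.mp this).resolve_left hc2
          have hN2 : N 2 = 0 := by
            have : c3 * N 2 = 0 := by rw [← e2, hN0]; ring
            exact (mul_eq_zero.mp this).resolve_left hc3
          exact ⟨hN0, hN1, hN2⟩
  apply hN
  funext i
  fin_cases i
  · exact hNzero.1
  · exact hNzero.2.1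
  · exact hNzero.2.2
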